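/- Let f : X ⟶ Y be a morphism of simplicial Heyting algebras (simplicial objects in the category of Heyting algebras and Heyting algebra homomorphisms) such that f_n is surjective for every n. Then the underlying morphism of simplicial sets is a Kan fibration, i.e. it has the right lifting property with respect to every horn inclusion Λ[n,k] ⟶ Δ[n] for n ≥ 1 and 0 ≤ k ≤ n. -/

import Mathlib

open CategoryTheory Simplicial SSet Opposite

universe u

/-- The functor sending a simplicial Heyting algebra to its underlying
simplicial set. -/
def simplicialHeytingToSSet :
    CategoryTheory.SimplicialObject HeytAlg.{u} ⥤ SSet.{u} :=
  (CategoryTheory.SimplicialObject.whiskering _ _).obj (forget HeytAlg)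

namespace SimplicialHeytingAux

open SimplexCategory

/-- The Maltsev operation of Heyting algebras. -/
def mal {α : Type*} [HeytingAlgebra α] (a b c : α) : α :=
  ((a ⇨ b) ⇨ c) ⊓ ((c ⇨ b) ⇨ a)

lemma mal_left {α : Type*} [HeytingAlgebra α] (a b : α) : mal a a b = b := by
  simp [mal, inf_eq_left, le_himp_iff]

lemma mal_right {α : Type*} [HeytingAlgebra α] (a b : α) : mal a b b = a := by
  simp [mal, inf_eq_right, le_himp_iff]

lemma map_mal {α β : Type*} [HeytingAlgebra α] [HeytingAlgebra β]
    (g : HeytingHom α β) (a b c : α) : g (mal a b c) = mal (g a) (g b) (g c) := by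
  simp [mal, map_inf, map_himp]

lemma succAbove_val {n : ℕ} (p : Fin (n+2)) (t : Fin (n+1)) :
    ((p.succAbove t : Fin (n+2)) : ℕ) = if (t:ℕ) < p then (t:ℕ) else (t:ℕ)+1 := by
  rw [Fin.succAbove]
  rcases lt_or_ge (t.castSucc) p with h | h
  · rw [if_pos h, if_pos (by simpa [Fin.lt_def] using h), Fin.coe_castSucc]
  · rw [if_neg (not_lt.2 h), if_neg (by simpa [Fin.lt_def, Fin.le_def] using h), Fin.val_succ]

lemma predAbove_val {n : ℕ} (p : Fin (n+1)) (t : Fin (n+2)) :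
    ((p.predAbove t : Fin (n+1)) : ℕ) = if (p:ℕ) < t then (t:ℕ)-1 else (t:ℕ) := by
  rw [Fin.predAbove]
  rcases lt_or_ge (p.castSucc) t with h | h
  · rw [dif_pos h, if_pos (by simpa [Fin.lt_def] using h), Fin.coe_pred]
  · rw [dif_neg (not_lt.2 h), if_neg (by simpa [Fin.lt_def, Fin.le_def] using h), Fin.coe_castPred]

lemma range_lemma {n : ℕ} (r j : Fin (n+2)) (r'' : Fin (n+1))
    (hcase : ((r:ℕ) = r'' ∧ (j:ℕ) < r'') ∨ ((r:ℕ) = (r'':ℕ)+1 ∧ ((j:ℕ) < r'' ∨ (r:ℕ) < j)))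
    (t : Fin (n+1)) :
    (δ j ≫ σ r'' ≫ δ r : (⦋n⦌ : SimplexCategory) ⟶ ⦋n+1⦌).toOrderHom t ≠ j := by
  intro h
  have hv : ((r.succAbove (r''.predAbove (j.succAbove t)) : Fin (n+2)) : ℕ) = (j:ℕ) := by
    rw [show r.succAbove (r''.predAbove (j.succAbove t))
        = (δ j ≫ σ r'' ≫ δ r : (⦋n⦌ : SimplexCategory) ⟶ ⦋n+1⦌).toOrderHom t from rfl, h]
  have h1 := succAbove_val j t
  have h2 := predAbove_val r'' (j.succAbove t)
  rw [succAbove_val r (r''.predAbove (j.succAbove t))] at hv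
  split_ifs at h1 h2 hv <;> omega

lemma horn_map_val {n : ℕ} {i : Fin (n+2)} {m m' : SimplexCategory} (g : m ⟶ m')
    (e : (Λ[n+1, i] : SSet.{u}).obj (op m')) :
    ((Λ[n+1, i] : SSet.{u}).map g.op e).1
      = (stdSimplex.objEquiv).symm (g ≫ (stdSimplex.objEquiv) e.1) := by
  change Δ[n+1].map g.op e.1 = _
  rw [stdSimplex.map_apply]
  rfl

lemma face_sim {n : ℕ} {i : Fin (n+2)} (j : Fin (n+2)) (hj : j ≠ i) :
    (stdSimplex.objEquiv) (horn.face i j hj).1 = δ j :=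
  Equiv.apply_symm_apply _ _

end SimplicialHeytingAux

open SimplicialHeytingAux SimplexCategory

/-- A degreewise surjective morphism of simplicial Heyting algebras is a Kan
fibration on underlying simplicial sets. -/
theorem simplicial_heyting_surjective_is_kan_fibration
    (X Y : CategoryTheory.SimplicialObject HeytAlg.{u}) (f : X ⟶ Y)
    (hsurj : ∀ s : SimplexCategoryᵒᵖ, Function.Surjective (f.app s)) :
    ∀ (n : ℕ) (k : Fin (n + 2)),
      HasLiftingProperty ((horn (n + 1) k).ι) (simplicialHeytingToSSet.map f) := by
  intro n k
  constructor
  intro u v sq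
  -- basic elementwise lemmas
  have fapp : ∀ {s t : SimplexCategoryᵒᵖ} (h : s ⟶ t) (a : (X.obj s : Type u)),
      (f.app t) ((X.map h) a) = (Y.map h) ((f.app s) a) := by
    intro s t h a
    calc (f.app t) ((X.map h) a) = (X.map h ≫ f.app t) a := (comp_apply _ _ _).symm
      _ = (f.app s ≫ Y.map h) a := by rw [f.naturality h]
      _ = (Y.map h) ((f.app s) a) := comp_apply _ _ _
  have Xcomp : ∀ {m m' m'' : SimplexCategory} (a : m ⟶ m') (b : m' ⟶ m'')
      (t : (X.obj (op m'') : Type u)),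
      (X.map a.op) ((X.map b.op) t) = (X.map (a ≫ b).op) t := by
    intro m m' m'' a b t
    rw [op_comp, X.map_comp]
    exact (comp_apply _ _ _).symm
  -- the simplex of Y to be lifted
  set y : (Y.obj (op ⦋n+1⦌) : Type u) :=
    v.app (op ⦋n+1⦌) ((stdSimplex.objEquiv).symm (𝟙 (⦋n+1⦌ : SimplexCategory))) with hy
  have vapp : ∀ (m : SimplexCategoryᵒᵖ) (g : m.unop ⟶ (⦋n+1⦌ : SimplexCategory)),
      v.app m ((stdSimplex.objEquiv).symm g) = (Y.map g.op) y := by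
    intro m g
    have h1 := FunctorToTypes.naturality v (g.op : op (⦋n+1⦌ : SimplexCategory) ⟶ m)
      ((stdSimplex.objEquiv).symm (𝟙 (⦋n+1⦌ : SimplexCategory)))
    dsimp at h1
    rw [stdSimplex.map_apply] at h1
    simp at h1
    exact h1
  have uapp : ∀ {m m' : SimplexCategory} (g : m ⟶ m') (e : (Λ[n+1, k] : SSet.{u}).obj (op m')),
      u.app (op m) ((Λ[n+1, k] : SSet.{u}).map g.op e) = (X.map g.op) (u.app (op m') e) := by
    intro m m' g e
    exact FunctorToTypes.naturality u (g.op : op m' ⟶ op m) e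
  have sqapp : ∀ {m : SimplexCategoryᵒᵖ} (e : (Λ[n+1, k] : SSet.{u}).obj m),
      (f.app m) (u.app m e) = v.app m e.1 := by
    intro m e
    have := congrArg (fun (t : (Λ[n+1, k] : SSet.{u}) ⟶ simplicialHeytingToSSet.obj Y) =>
      t.app m e) sq.w
    exact this
  -- the faces of the horn
  set x : ∀ (j : Fin (n+2)), j ≠ k → (X.obj (op ⦋n⦌) : Type u) :=
    fun j hj => u.app (op ⦋n⦌) (horn.face k j hj) with hx
  -- the correction step
  have step : ∀ (r : Fin (n+2)) (r'' : Fin (n+1)) (hrk : r ≠ k)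
      (P : Fin (n+2) → Prop)
      (hP : ∀ j, P j → (((r:ℕ) = r'' ∧ (j:ℕ) < r'') ∨
        ((r:ℕ) = (r'':ℕ)+1 ∧ ((j:ℕ) < r'' ∨ (r:ℕ) < (j:ℕ)))))
      (hrr : (r:ℕ) = r'' ∨ (r:ℕ) = (r'':ℕ)+1)
      (w : (X.obj (op ⦋n+1⦌) : Type u)),
      (f.app (op ⦋n+1⦌) w = y ∧ ∀ j (hj : j ≠ k), P j → (X.map (δ j).op) w = x j hj) →
      ∃ w' : (X.obj (op ⦋n+1⦌) : Type u),
        f.app (op ⦋n+1⦌) w' = y ∧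
          ∀ j (hj : j ≠ k), (P j ∨ j = r) → (X.map (δ j).op) w' = x j hj := by
    rintro r r'' hrk P hP hrr w ⟨hwf, hwd⟩
    set e₁ : (Λ[n+1, k] : SSet.{u}).obj (op ⦋n+1⦌) :=
      (Λ[n+1, k] : SSet.{u}).map (σ r'').op (horn.face k r hrk) with he₁
    set b : (X.obj (op ⦋n+1⦌) : Type u) := (X.map (σ r'' ≫ δ r).op) w with hb
    set c : (X.obj (op ⦋n+1⦌) : Type u) := u.app (op ⦋n+1⦌) e₁ with hc
    have he₁v : e₁.1 = (stdSimplex.objEquiv).symm (σ r'' ≫ δ r) := by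
      rw [he₁, horn_map_val, face_sim]
    refine ⟨mal w b c, ?_, ?_⟩
    · rw [map_mal (f.app (op ⦋n+1⦌)).hom, hwf]
      have hfb : f.app (op ⦋n+1⦌) b = (Y.map (σ r'' ≫ δ r).op) y := by
        rw [hb, fapp, hwf]
      have hfc : f.app (op ⦋n+1⦌) c = (Y.map (σ r'' ≫ δ r).op) y := by
        rw [hc, sqapp e₁, he₁v]
        exact vapp (op ⦋n+1⦌) (σ r'' ≫ δ r)
      rw [hfb, hfc, mal_right]
    · intro j hj hcase
      have hexp : (X.map (δ j).op) (mal w b c)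
          = mal ((X.map (δ j).op) w) ((X.map (δ j).op) b) ((X.map (δ j).op) c) :=
        map_mal _ _ _ _
      have hdb : (X.map (δ j).op) b = (X.map (δ j ≫ σ r'' ≫ δ r).op) w := by
        rw [hb, Xcomp]
      have hdc : (X.map (δ j).op) c
          = u.app (op ⦋n⦌) ((Λ[n+1, k] : SSet.{u}).map (δ j ≫ σ r'').op (horn.face k r hrk)) := by
        rw [hc, he₁, ← uapp, op_comp, FunctorToTypes.map_comp_apply]
      rcases hcase with hPj | rfl
      · -- previously fixed face is preserved
        have hrange := range_lemma r j r'' (hP j hPj)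
        have hfac : factor_δ (δ j ≫ σ r'' ≫ δ r) j ≫ δ j = δ j ≫ σ r'' ≫ δ r :=
          factor_δ_spec _ j hrange
        have h1 : (X.map (δ j).op) b
            = u.app (op ⦋n⦌)
                ((Λ[n+1, k] : SSet.{u}).map (factor_δ (δ j ≫ σ r'' ≫ δ r) j).op (horn.face k j hj)) := by
          rw [hdb]
          conv_lhs => rw [← hfac]
          rw [← Xcomp, hwd j hj hPj]
          exact (uapp _ _).symm
        have h2 : (Λ[n+1, k] : SSet.{u}).map (factor_δ (δ j ≫ σ r'' ≫ δ r) j).op (horn.face k j hj)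
            = (Λ[n+1, k] : SSet.{u}).map (δ j ≫ σ r'').op (horn.face k r hrk) := by
          apply Subtype.ext
          rw [horn_map_val, horn_map_val, face_sim, face_sim, hfac, Category.assoc]
        rw [hexp, hwd j hj hPj, h1, h2, ← hdc, mal_right]
      · -- the newly fixed face
        have hid : δ j ≫ σ r'' = 𝟙 (⦋n⦌ : SimplexCategory) := by
          rcases hrr with h | h
          · exact δ_comp_σ_self' (Fin.ext (by simpa using h))
          · exact δ_comp_σ_succ' (Fin.ext (by simpa using h))
        have hdb' : (X.map (δ j).op) b = (X.map (δ j).op) w := by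
          rw [hdb, ← Category.assoc, hid, Category.id_comp]
        have hdc' : (X.map (δ j).op) c = x j hj := by
          rw [hdc, hid, op_id, FunctorToTypes.map_id_apply]
        rw [hexp, hdb', hdc', mal_left]
  -- ascending induction: fix the faces below `k`
  have asc : ∀ c : ℕ, c ≤ (k:ℕ) → ∃ w : (X.obj (op ⦋n+1⦌) : Type u),
      f.app (op ⦋n+1⦌) w = y ∧ ∀ j (hj : j ≠ k), (j:ℕ) < c → (X.map (δ j).op) w = x j hj := by
    intro c
    induction c with
    | zero =>
      intro _
      obtain ⟨w, hw⟩ := hsurj (op ⦋n+1⦌) y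
      exact ⟨w, hw, fun j hj h => absurd h (Nat.not_lt_zero _)⟩
    | succ c ih =>
      intro hc
      obtain ⟨w, hw⟩ := ih (by omega)
      have hk2 := k.isLt
      obtain ⟨w', hw'⟩ := step ⟨c, by omega⟩ ⟨c, by omega⟩
        (Fin.ne_of_val_ne (show c ≠ (k:ℕ) by omega))
        (fun j => (j:ℕ) < c)
        (fun j hj => Or.inl ⟨rfl, hj⟩)
        (Or.inl rfl) w hw
      refine ⟨w', hw'.1, fun j hj hjc => hw'.2 j hj ?_⟩
      rcases Nat.lt_succ_iff_lt_or_eq.mp hjc with h | h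
      · exact Or.inl h
      · exact Or.inr (Fin.ext h)
  -- descending induction: fix the faces above `k`
  have desc : ∀ t : ℕ, t ≤ n + 2 - (k:ℕ) → ∃ w : (X.obj (op ⦋n+1⦌) : Type u),
      f.app (op ⦋n+1⦌) w = y ∧ ∀ j (hj : j ≠ k), ((j:ℕ) < k ∨ n + 2 - t ≤ (j:ℕ)) →
        (X.map (δ j).op) w = x j hj := by
    intro t
    induction t with
    | zero =>
      intro _
      obtain ⟨w, hw1, hw2⟩ := asc (k:ℕ) le_rfl
      refine ⟨w, hw1, fun j hj hcase => hw2 j hj ?_⟩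
      have := j.isLt
      rcases hcase with h | h
      · exact h
      · omega
    | succ t ih =>
      intro ht
      have hk2 := k.isLt
      obtain ⟨w, hw⟩ := ih (by omega)
      by_cases hrk : n + 1 - t = (k:ℕ)
      · refine ⟨w, hw.1, fun j hj hcase => hw.2 j hj ?_⟩
        have hjk : (j:ℕ) ≠ (k:ℕ) := fun hh => hj (Fin.ext hh)
        rcases hcase with h | h
        · exact Or.inl h
        · right; omega
      · have hkt : (k:ℕ) < n + 1 - t := by omega
        obtain ⟨w', hw'⟩ := step ⟨n+1-t, by omega⟩ ⟨n-t, by omega⟩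
          (Fin.ne_of_val_ne hrk)
          (fun j => (j:ℕ) < k ∨ n + 2 - t ≤ (j:ℕ))
          (fun j hj => Or.inr ⟨by simp; omega, by
            have := j.isLt
            rcases hj with h | h
            · left; simp; omega
            · right; simp; omega⟩)
          (Or.inr (by simp; omega))
          w hw
        refine ⟨w', hw'.1, fun j hj hcase => hw'.2 j hj ?_⟩
        rcases hcase with h | h
        · exact Or.inl (Or.inl h)
        · by_cases he : (j:ℕ) = n+1-t
          · exact Or.inr (Fin.ext he)
          · exact Or.inl (Or.inr (by omega))
  -- the filler
  obtain ⟨w, hwf, hwd⟩ := desc (n + 2 - (k:ℕ)) le_rfl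
  have hwd' : ∀ j (hj : j ≠ k), (X.map (δ j).op) w = x j hj := by
    intro j hj
    refine hwd j hj ?_
    have hjk : (j:ℕ) ≠ (k:ℕ) := fun hh => hj (Fin.ext hh)
    have := j.isLt
    omega
  -- the lift
  let l : Δ[n+1] ⟶ simplicialHeytingToSSet.obj X :=
    { app := fun m => ↾(fun α => (X.map ((stdSimplex.objEquiv) α).op) w)
      naturality := by
        intro s t g
        apply ConcreteCategory.hom_ext
        intro α
        show (X.map ((stdSimplex.objEquiv) (Δ[n+1].map g α)).op) w
            = (X.map g) ((X.map ((stdSimplex.objEquiv) α).op) w)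
        rw [stdSimplex.map_apply, Equiv.apply_symm_apply, op_comp,
          Quiver.Hom.op_unop, X.map_comp, comp_apply] }
  refine ⟨⟨⟨l, ?_, ?_⟩⟩⟩
  · apply horn.hom_ext
    intro j hj
    show (X.map ((stdSimplex.objEquiv.{u}) ((horn.face k j hj : (Λ[n+1, k] : SSet.{u}) _⦋n⦌)).1).op) w
      = u.app (op ⦋n⦌) (horn.face k j hj)
    rw [face_sim]
    exact hwd' j hj
  · apply NatTrans.ext
    funext m
    apply ConcreteCategory.hom_ext
    intro α
    show (f.app m) ((X.map ((stdSimplex.objEquiv) α).op) w) = v.app m α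
    rw [fapp, hwf]
    conv_rhs => rw [show α = (stdSimplex.objEquiv).symm
      ((stdSimplex.objEquiv) α) from (Equiv.symm_apply_apply _ _).symm]
    exact (vapp m _).symm
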